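/- arXiv:1805.06579 — 2 statements merged into one kernel-verified Lean document; each statement's English description precedes it below -/
import Mathlib

section
/- Let r > 0 and let X : I → ℝⁿ be a twice continuously differentiable solution of the A-ADMM flow AᵀA (Ẍ(t) + (r/t) Ẋ(t)) + ∇V(X(t)) = 0 on an interval I ⊆ (0, ∞). Then for every t ∈ I, the derivative of t ↦ ½‖A Ẋ(t)‖² + V(X(t)) equals −(r/t)‖A Ẋ(t)‖². -/
open Matrix Set RealInnerProductSpace

set_option maxHeartbeats 1000000

lemma toEuclideanLin_mul_apply {m n : ℕ} (B : Matrix (Fin n) (Fin m) ℝ)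
    (A : Matrix (Fin m) (Fin n) ℝ) (v : EuclideanSpace ℝ (Fin n)) :
    Matrix.toEuclideanLin (B * A) v = Matrix.toEuclideanLin B (Matrix.toEuclideanLin A v) := by
  simp [Matrix.toEuclideanLin_apply, Matrix.mulVec_mulVec]

lemma inner_toEuclideanLin_transpose_mul {m n : ℕ} (A : Matrix (Fin m) (Fin n) ℝ)
    (v w : EuclideanSpace ℝ (Fin n)) :
    ⟪Matrix.toEuclideanLin (Aᵀ * A) v, w⟫ =
      ⟪Matrix.toEuclideanLin A v, Matrix.toEuclideanLin A w⟫ := by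
  rw [toEuclideanLin_mul_apply, ← Matrix.conjTranspose_eq_transpose_of_trivial,
    Matrix.toEuclideanLin_conjTranspose_eq_adjoint, LinearMap.adjoint_inner_left]

/-- **Energy dissipation along the A-ADMM flow.**
Let `r > 0` and let `X` be a twice continuously differentiable solution of the A-ADMM
flow `AᵀA(Ẍ(t) + (r/t)Ẋ(t)) + ∇V(X(t)) = 0` on an interval `I ⊆ (0, ∞)`. Then for
every `t ∈ I`, the derivative of `t ↦ ½‖AẊ(t)‖² + V(X(t))` equals `−(r/t)‖AẊ(t)‖²`. -/
theorem aadmm_flow_energy_dissipation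
    {m n : ℕ} (hmn : n ≤ m)
    (f : EuclideanSpace ℝ (Fin n) → ℝ) (g : EuclideanSpace ℝ (Fin m) → ℝ)
    (hf : ContDiff ℝ 1 f) (hg : ContDiff ℝ 1 g)
    (hfconv : ConvexOn ℝ Set.univ f) (hgconv : ConvexOn ℝ Set.univ g)
    (A : Matrix (Fin m) (Fin n) ℝ) (hA : A.rank = n)
    (V : EuclideanSpace ℝ (Fin n) → ℝ)
    (hV : ∀ x, V x = f x + g (Matrix.toEuclideanLin A x))
    (r : ℝ) (hr : 0 < r)
    (I : Set ℝ) (hI : I.OrdConnected) (hIpos : I ⊆ Set.Ioi (0 : ℝ))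
    (X X' X'' : ℝ → EuclideanSpace ℝ (Fin n))
    (hX : ∀ t ∈ I, HasDerivAt X (X' t) t)
    (hX' : ∀ t ∈ I, HasDerivAt X' (X'' t) t)
    (hX'' : ContinuousOn X'' I)
    (hflow : ∀ t ∈ I,
      Matrix.toEuclideanLin (Aᵀ * A) (X'' t + (r / t) • X' t) + gradient V (X t) = 0) :
    ∀ t ∈ I,
      HasDerivAt (fun s => (1 / 2) * ‖Matrix.toEuclideanLin A (X' s)‖ ^ 2 + V (X s))
        (-(r / t) * ‖Matrix.toEuclideanLin A (X' t)‖ ^ 2) t := by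
  intro t ht
  have ht0 : (0 : ℝ) < t := hIpos ht
  set L : EuclideanSpace ℝ (Fin n) →L[ℝ] EuclideanSpace ℝ (Fin m) :=
    LinearMap.toContinuousLinearMap (Matrix.toEuclideanLin A) with hL
  have hLe : ∀ v, L v = Matrix.toEuclideanLin A v := fun v => rfl
  -- V is differentiable
  have hVdiff : DifferentiableAt ℝ V (X t) := by
    have : V = fun x => f x + g (L x) := by funext x; rw [hV x]; rfl
    rw [this]
    exact ((hf.differentiable one_ne_zero).differentiableAt).add
      (((hg.differentiable one_ne_zero).differentiableAt).comp _ (L.differentiableAt))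
  -- derivative of V ∘ X
  have hVd : HasDerivAt (fun s => V (X s))
      ⟪gradient V (X t), X' t⟫ t := by
    have h1 := hVdiff.hasGradientAt.hasFDerivAt.comp_hasDerivAt t (hX t ht)
    simp at h1 ⊢
    exact h1
  -- derivative of s ↦ L (X' s)
  have hφ : HasDerivAt (fun s => L (X' s)) (L (X'' t)) t :=
    L.hasFDerivAt.comp_hasDerivAt t (hX' t ht)
  -- derivative of the kinetic term
  have hkin : HasDerivAt (fun s => (1 / 2) * ‖Matrix.toEuclideanLin A (X' s)‖ ^ 2)
      ⟪L (X'' t), L (X' t)⟫ t := by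
    have h2 : HasDerivAt (fun s => ⟪L (X' s), L (X' s)⟫)
        (⟪L (X' t), L (X'' t)⟫ + ⟪L (X'' t), L (X' t)⟫) t :=
      hφ.inner ℝ hφ
    have h3 := h2.const_mul (1 / 2 : ℝ)
    have heq : (fun s => (1 / 2 : ℝ) * ⟪L (X' s), L (X' s)⟫) =
        fun s => (1 / 2) * ‖Matrix.toEuclideanLin A (X' s)‖ ^ 2 := by
      funext s
      rw [real_inner_self_eq_norm_sq, hLe]
    rw [heq] at h3
    convert h3 using 1
    · rfl
    · rfl
    rw [real_inner_comm (L (X' t)) (L (X'' t))]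
    ring
  have hsum := hkin.add hVd
  convert hsum using 1
  · rfl
  · rfl
  · rfl
  -- identify the derivative value using the flow equation
  have hgrad : gradient V (X t) =
      -(Matrix.toEuclideanLin (Aᵀ * A) (X'' t + (r / t) • X' t)) := by
    have := hflow t ht
    linear_combination (norm := module) this
  rw [hgrad, inner_neg_left, inner_toEuclideanLin_transpose_mul, map_add, _root_.map_smul,
    inner_add_left, real_inner_smul_left]
  simp only [← hLe]
  rw [real_inner_self_eq_norm_sq]
  ring
end

section
/- Let r ≥ 3, let X : [t₀, ∞) → ℝⁿ (with t₀ > 0) be a twice continuously differentiable solution of the A-ADMM flow AᵀA (Ẍ(t) + (r/t) Ẋ(t)) + ∇V(X(t)) = 0, and let X⋆ be a minimizer of V. Suppose there is a function φ : [0, ∞) → [0, ∞) such that V(X) − V(X⋆) ≥ φ(‖X − X⋆‖) for all X ∈ ℝⁿ, and such that for every sequence (ξ_k) in [0, ∞), φ(ξ_k) → 0 implies ξ_k → 0. Then X(t) → X⋆ and Ẋ(t) → 0 as t → ∞. -/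
open Matrix Set Filter

open scoped RealInnerProductSpace

lemma convex_gradient_ineq {E : Type*} [NormedAddCommGroup E] [InnerProductSpace ℝ E]
    [CompleteSpace E] {V : E → ℝ}
    (hconv : ConvexOn ℝ Set.univ V) {x : E} (hd : DifferentiableAt ℝ V x) (y : E) :
    V x + ⟪gradient V x, y - x⟫ ≤ V y := by
  have hgr : HasFDerivAt V (InnerProductSpace.toDual ℝ E (gradient V x)) x :=
    hasGradientAt_iff_hasFDerivAt.mp hd.hasGradientAt
  set q : ℝ → ℝ := fun s => V (x + s • (y - x)) with hq
  have hqc : ConvexOn ℝ Set.univ q := by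
    have h2 := hconv.comp_affineMap (AffineMap.lineMap x y : ℝ →ᵃ[ℝ] E)
    have h3 : (V ∘ ⇑(AffineMap.lineMap x y : ℝ →ᵃ[ℝ] E)) = q := by
      funext s; simp [hq, Function.comp, AffineMap.lineMap_apply, add_comm]
    simpa [h3] using h2
  have hcurve : HasDerivAt (fun s : ℝ => x + s • (y - x)) (y - x) 0 := by
    simpa using ((hasDerivAt_id (0:ℝ)).smul_const (y - x)).const_add x
  have hgr0 : HasFDerivAt V (InnerProductSpace.toDual ℝ E (gradient V x))
      (x + (0:ℝ) • (y - x)) := by simpa using hgr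
  have hqd : HasDerivAt q (⟪gradient V x, y - x⟫ : ℝ) 0 := by
    have := hgr0.comp_hasDerivAt 0 hcurve
    exact this.congr_deriv (by rw [InnerProductSpace.toDual_apply_apply])
  have := hqc.le_slope_of_hasDerivAt (mem_univ (0:ℝ)) (mem_univ (1:ℝ)) zero_lt_one hqd
  have hslope : slope q 0 1 = V y - V x := by simp [slope_def_field, hq]
  rw [hslope] at this
  linarith

set_option maxHeartbeats 2000000 in
/-- **Convergence of trajectories of the A-ADMM flow under a forcing condition.**
Let `r ≥ 3`, let `X` be a twice continuously differentiable solution of the A-ADMM flow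
`AᵀA(Ẍ(t) + (r/t)Ẋ(t)) + ∇V(X(t)) = 0` on `[t₀, ∞)` (with `t₀ > 0`), and let `X⋆` be a
minimizer of `V`. Suppose `φ : [0, ∞) → [0, ∞)` is a forcing function, i.e.
`V(X) − V(X⋆) ≥ φ(‖X − X⋆‖)` for all `X`, and for every sequence `(ξ_k) ⊆ [0, ∞)`,
`φ(ξ_k) → 0` implies `ξ_k → 0`. Then `X(t) → X⋆` and `Ẋ(t) → 0` as `t → ∞`. -/
theorem aadmm_flow_trajectory_convergence
    {m n : ℕ} (hmn : n ≤ m)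
    (f : EuclideanSpace ℝ (Fin n) → ℝ) (g : EuclideanSpace ℝ (Fin m) → ℝ)
    (hf : ContDiff ℝ 1 f) (hg : ContDiff ℝ 1 g)
    (hfconv : ConvexOn ℝ Set.univ f) (hgconv : ConvexOn ℝ Set.univ g)
    (A : Matrix (Fin m) (Fin n) ℝ) (hA : A.rank = n)
    (V : EuclideanSpace ℝ (Fin n) → ℝ)
    (hV : ∀ x, V x = f x + g (Matrix.toEuclideanLin A x))
    (r : ℝ) (hr : 3 ≤ r)
    (t₀ : ℝ) (ht₀ : 0 < t₀)
    (X X' X'' : ℝ → EuclideanSpace ℝ (Fin n))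
    (hX : ∀ t ∈ Set.Ici t₀, HasDerivAt X (X' t) t)
    (hX' : ∀ t ∈ Set.Ici t₀, HasDerivAt X' (X'' t) t)
    (hX'' : ContinuousOn X'' (Set.Ici t₀))
    (hflow : ∀ t ∈ Set.Ici t₀,
      Matrix.toEuclideanLin (Aᵀ * A) (X'' t + (r / t) • X' t) + gradient V (X t) = 0)
    (Xstar : EuclideanSpace ℝ (Fin n)) (hXstar : ∀ x, V Xstar ≤ V x)
    (φ : ℝ → ℝ) (hφnonneg : ∀ s, 0 ≤ s → 0 ≤ φ s)
    (hforcing : ∀ x, φ ‖x - Xstar‖ ≤ V x - V Xstar)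
    (hφforce : ∀ ξ : ℕ → ℝ, (∀ k, 0 ≤ ξ k) →
      Tendsto (fun k => φ (ξ k)) atTop (nhds 0) → Tendsto ξ atTop (nhds 0)) :
    Tendsto X atTop (nhds Xstar) ∧ Tendsto X' atTop (nhds 0) := by
  classical
  have hBcB : ∀ v, (LinearMap.toContinuousLinearMap (Matrix.toEuclideanLin A)) v
      = Matrix.toEuclideanLin A v := fun v => rfl
  set B : EuclideanSpace ℝ (Fin n) →ₗ[ℝ] EuclideanSpace ℝ (Fin m) := Matrix.toEuclideanLin A
    with hBdef
  set Bc : EuclideanSpace ℝ (Fin n) →L[ℝ] EuclideanSpace ℝ (Fin m) :=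
    LinearMap.toContinuousLinearMap B with hBcdef
  -- V is differentiable
  have hVeq : V = fun x => f x + g (Bc x) := by
    funext x; rw [hV x]; rfl
  have hVd : Differentiable ℝ V := by
    rw [hVeq]
    exact (hf.differentiable one_ne_zero).add
      ((hg.differentiable one_ne_zero).comp Bc.differentiable)
  -- V is convex
  have hVconv : ConvexOn ℝ Set.univ V := by
    rw [hVeq]
    refine hfconv.add ?_
    have h2 := hgconv.comp_affineMap (Bc.toLinearMap.toAffineMap)
    have h3 : (g ∘ ⇑(Bc.toLinearMap.toAffineMap)) = fun x => g (Bc x) := by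
      funext x; simp
    rw [h3] at h2
    simpa using h2
  -- gradient inequalities
  have hgi : ∀ x, V x - V Xstar ≤ ⟪gradient V x, x - Xstar⟫ := by
    intro x
    have h1 := convex_gradient_ineq hVconv (hVd x) Xstar
    have h2 : ⟪gradient V x, Xstar - x⟫ = -⟪gradient V x, x - Xstar⟫ := by
      rw [← inner_neg_right, neg_sub]
    linarith
  have hgi' : ∀ x, 0 ≤ ⟪gradient V x, x - Xstar⟫ := fun x =>
    le_trans (by linarith [hXstar x]) (hgi x)
  -- injectivity of B
  have hInj : Function.Injective B := by
    have hker : LinearMap.ker A.mulVecLin = ⊥ := by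
      have h1 := A.mulVecLin.finrank_range_add_finrank_ker
      have h2 : Module.finrank ℝ (LinearMap.range A.mulVecLin) = n := hA
      have h3 : Module.finrank ℝ (Fin n → ℝ) = n := by simp
      rw [h2, h3] at h1
      have : Module.finrank ℝ (LinearMap.ker A.mulVecLin) = 0 := by omega
      exact Submodule.finrank_eq_zero.mp this
    have hmv : Function.Injective A.mulVecLin := LinearMap.ker_eq_bot.mp hker
    intro x y hxy
    have : A.mulVecLin (WithLp.equiv 2 _ x) = A.mulVecLin (WithLp.equiv 2 _ y) := by
      have := congrArg (WithLp.equiv 2 (Fin m → ℝ)) hxy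
      simpa [hBdef, Matrix.toEuclideanLin_apply, Matrix.mulVecLin_apply] using this
    exact (WithLp.equiv 2 _).injective (hmv this)
  obtain ⟨K, hK0, hKa⟩ := (B.injective_iff_antilipschitz).mp hInj
  have hKbound : ∀ v, ‖v‖ ≤ K * ‖B v‖ := by
    intro v
    have := hKa.le_mul_dist v 0
    simpa [dist_zero_right, map_zero] using this
  -- key inner product identity
  have hkey : ∀ u w, ⟪B u, B w⟫ = ⟪u, Matrix.toEuclideanLin (Aᵀ * A) w⟫ := by
    intro u w
    have h1 : Matrix.toEuclideanLin (Aᵀ * A) w = Matrix.toEuclideanLin Aᵀ (B w) := by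
      simp [hBdef, Matrix.toEuclideanLin_apply, Matrix.mulVec_mulVec]
    have h2 : (Aᵀ : Matrix (Fin n) (Fin m) ℝ) = Aᴴ :=
      (A.conjTranspose_eq_transpose_of_trivial).symm
    rw [h1, h2, Matrix.toEuclideanLin_conjTranspose_eq_adjoint]
    rw [LinearMap.adjoint_inner_right]
  clear_value B Bc
  -- the Lyapunov quantities
  set a : ℝ → ℝ := fun t => V (X t) - V Xstar with hadef
  set W : ℝ → EuclideanSpace ℝ (Fin n) :=
    fun t => (r - 1) • (X t - Xstar) + t • X' t with hWdef
  set En : ℝ → ℝ := fun t => t ^ 2 * a t + 1 / 2 * ‖B (W t)‖ ^ 2 with hEndef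
  clear_value a W En
  have hEnt : ∀ s, En s = s ^ 2 * a s + 1 / 2 * ‖B (W s)‖ ^ 2 := fun s => by
    rw [hEndef]
  have ha0 : ∀ t, 0 ≤ a t := by
    intro t; simp only [hadef]; linarith [hXstar (X t)]
  -- derivative of the Lyapunov function
  have hE : ∀ t ∈ Set.Ici t₀, HasDerivAt En
      (2 * t * a t - (r - 1) * t * ⟪gradient V (X t), X t - Xstar⟫) t := by
    intro t ht
    simp only [hEndef, hWdef, hadef]
    have htpos : 0 < t := lt_of_lt_of_le ht₀ ht
    have hXt := hX t ht
    have hX't := hX' t ht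
    have hgrt : HasFDerivAt V (InnerProductSpace.toDual ℝ _ (gradient V (X t))) (X t) :=
      hasGradientAt_iff_hasFDerivAt.mp (hVd (X t)).hasGradientAt
    have hat : HasDerivAt (fun s => V (X s) - V Xstar) ⟪gradient V (X t), X' t⟫ t := by
      have h := (hgrt.comp_hasDerivAt t hXt).sub_const (V Xstar)
      simpa [InnerProductSpace.toDual_apply_apply] using h
    have hW1 : HasDerivAt (fun s => (r - 1) • (X s - Xstar)) ((r - 1) • X' t) t :=
      (hXt.sub_const Xstar).const_smul (r - 1)
    have hW2 : HasDerivAt (fun s : ℝ => s • X' s) (X' t + t • X'' t) t := by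
      have h := (hasDerivAt_id t).smul hX't
      have h' : HasDerivAt (fun s : ℝ => s • X' s) (t • X'' t + (1:ℝ) • X' t) t := h
      convert h' using 1
      module
    have hWt : HasDerivAt (fun s => (r - 1) • (X s - Xstar) + s • X' s)
        (r • X' t + t • X'' t) t := by
      have h := hW1.add hW2
      have he : (r - 1) • X' t + (X' t + t • X'' t) = r • X' t + t • X'' t := by module
      rw [he] at h
      exact h
    have hBW : HasDerivAt (fun s => Bc ((r - 1) • (X s - Xstar) + s • X' s))
        (Bc (r • X' t + t • X'' t)) t :=
      Bc.hasFDerivAt.comp_hasDerivAt t hWt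
    have hIP : HasDerivAt (fun s => ‖B ((r - 1) • (X s - Xstar) + s • X' s)‖ ^ 2)
        (2 * ⟪B ((r - 1) • (X t - Xstar) + t • X' t),
             B (r • X' t + t • X'' t)⟫) t := by
      have h := HasDerivAt.inner ℝ hBW hBW
      have heq : (fun s => (⟪Bc ((r - 1) • (X s - Xstar) + s • X' s),
            Bc ((r - 1) • (X s - Xstar) + s • X' s)⟫ : ℝ))
          = fun s => ‖B ((r - 1) • (X s - Xstar) + s • X' s)‖ ^ 2 := by
        funext s
        rw [real_inner_self_eq_norm_sq]
        rw [hBcB]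
      rw [heq] at h
      refine HasDerivAt.congr_deriv h ?_
      rw [hBcB, hBcB,
        real_inner_comm (B ((r - 1) • (X t - Xstar) + t • X' t)) (B (r • X' t + t • X'' t))]
      ring
    have hEt : HasDerivAt
        (fun s => s ^ 2 * (V (X s) - V Xstar)
          + 1 / 2 * ‖B ((r - 1) • (X s - Xstar) + s • X' s)‖ ^ 2)
        (((2:ℕ):ℝ) * t ^ 1 * (V (X t) - V Xstar) + t ^ 2 * ⟪gradient V (X t), X' t⟫
          + 1 / 2 * (2 * ⟪B ((r - 1) • (X t - Xstar) + t • X' t),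
              B (r • X' t + t • X'' t)⟫)) t := by
      exact ((hasDerivAt_pow 2 t).mul hat).add (hIP.const_mul (1 / 2 : ℝ))
    have hW' : r • X' t + t • X'' t = t • (X'' t + (r / t) • X' t) := by
      rw [smul_add, smul_smul, mul_div_cancel₀ _ (ne_of_gt htpos)]
      module
    have hflow' : Matrix.toEuclideanLin (Aᵀ * A) (X'' t + (r / t) • X' t)
        = - gradient V (X t) := eq_neg_of_add_eq_zero_left (hflow t ht)
    have hBWinner : (⟪B ((r - 1) • (X t - Xstar) + t • X' t),
          B (r • X' t + t • X'' t)⟫ : ℝ)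
        = -(t * ((r - 1) * ⟪gradient V (X t), X t - Xstar⟫
            + t * ⟪gradient V (X t), X' t⟫)) := by
      rw [hkey, hW', LinearMap.map_smul, real_inner_smul_right, hflow']
      have hWexp : (⟪(r - 1) • (X t - Xstar) + t • X' t, -gradient V (X t)⟫ : ℝ)
          = -((r - 1) * ⟪gradient V (X t), X t - Xstar⟫
              + t * ⟪gradient V (X t), X' t⟫) := by
        rw [inner_neg_right]
        have h5 : (⟪(r - 1) • (X t - Xstar) + t • X' t, gradient V (X t)⟫ : ℝ)
            = (r - 1) * ⟪X t - Xstar, gradient V (X t)⟫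
              + t * ⟪X' t, gradient V (X t)⟫ := by
          rw [inner_add_left, real_inner_smul_left, real_inner_smul_left]
        rw [h5, real_inner_comm (X t - Xstar), real_inner_comm (X' t)]
      rw [hWexp]
      ring
    have hfinal : ((2:ℕ):ℝ) * t ^ 1 * (V (X t) - V Xstar)
          + t ^ 2 * ⟪gradient V (X t), X' t⟫
          + 1 / 2 * (2 * ⟪B ((r - 1) • (X t - Xstar) + t • X' t),
              B (r • X' t + t • X'' t)⟫)
        = 2 * t * (V (X t) - V Xstar)
          - (r - 1) * t * ⟪gradient V (X t), X t - Xstar⟫ := by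
      rw [hBWinner]
      push_cast
      ring
    rw [← hfinal]
    exact hEt
  -- energy is non-increasing
  have hEmono : ∀ t ∈ Set.Ici t₀, En t ≤ En t₀ := by
    have hanti : AntitoneOn En (Set.Ici t₀) := by
      refine antitoneOn_of_deriv_nonpos (convex_Ici t₀)
        (fun t ht => (hE t ht).continuousAt.continuousWithinAt)
        (fun t ht => ?_) (fun t ht => ?_)
      · rw [interior_Ici] at ht
        exact (hE t (mem_Ici.mpr (le_of_lt ht))).differentiableAt.differentiableWithinAt
      · rw [interior_Ici] at ht
        have htpos : 0 < t := lt_trans ht₀ ht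
        rw [(hE t (mem_Ici.mpr (le_of_lt ht))).deriv]
        have h1 : a t ≤ ⟪gradient V (X t), X t - Xstar⟫ := by
          simp only [hadef]; exact hgi (X t)
        have h2 := hgi' (X t)
        have h4 : 2 * t * a t ≤ 2 * t * ⟪gradient V (X t), X t - Xstar⟫ :=
          mul_le_mul_of_nonneg_left h1 (by linarith)
        have h5 : 0 ≤ (r - 3) * (t * ⟪gradient V (X t), X t - Xstar⟫) :=
          mul_nonneg (by linarith) (mul_nonneg htpos.le h2)
        linarith
    exact fun t ht => hanti self_mem_Ici ht ht
  have haC : ∀ t ∈ Set.Ici t₀, a t ≤ En t₀ / t ^ 2 := by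
    intro t ht
    have htpos : 0 < t := lt_of_lt_of_le ht₀ ht
    have h1 : t ^ 2 * a t + 1 / 2 * ‖B (W t)‖ ^ 2 ≤ En t₀ := by
      rw [← hEnt t]; exact hEmono t ht
    have h2 : (0:ℝ) ≤ ‖B (W t)‖ ^ 2 := sq_nonneg _
    rw [le_div_iff₀ (by positivity), mul_comm]
    linarith
  have hWB : ∀ t ∈ Set.Ici t₀, ‖B (W t)‖ ≤ Real.sqrt (2 * En t₀) := by
    intro t ht
    have h3 := ha0 t
    have htpos : 0 < t := lt_of_lt_of_le ht₀ ht
    have h2 : ‖B (W t)‖ ^ 2 ≤ 2 * En t₀ := by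
      have h1 : t ^ 2 * a t + 1 / 2 * ‖B (W t)‖ ^ 2 ≤ En t₀ := by
        rw [← hEnt t]; exact hEmono t ht
      have h5 : 0 ≤ t ^ 2 * a t := mul_nonneg (sq_nonneg t) h3
      linarith
    calc ‖B (W t)‖ = Real.sqrt (‖B (W t)‖ ^ 2) := by
          rw [Real.sqrt_sq (norm_nonneg _)]
      _ ≤ Real.sqrt (2 * En t₀) := Real.sqrt_le_sqrt h2
  -- first limit : X → Xstar
  have hφlim : Tendsto (fun t => φ ‖X t - Xstar‖) atTop (nhds 0) := by
    apply squeeze_zero' (Eventually.of_forall fun t => hφnonneg _ (norm_nonneg _))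
    · filter_upwards [eventually_ge_atTop t₀] with t ht
      refine le_trans (hforcing (X t)) (le_trans ?_ (haC t ht))
      simp only [hadef]
      exact le_refl _
    · exact Tendsto.div_atTop tendsto_const_nhds (tendsto_pow_atTop two_ne_zero)
  have hXnorm : Tendsto (fun t => ‖X t - Xstar‖) atTop (nhds 0) := by
    rw [tendsto_iff_seq_tendsto]
    intro u hu
    exact hφforce (fun k => ‖X (u k) - Xstar‖) (fun k => norm_nonneg _)
      (hφlim.comp hu)
  have hXlim : Tendsto X atTop (nhds Xstar) :=
    tendsto_iff_norm_sub_tendsto_zero.mpr hXnorm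
  -- second limit : X' → 0
  have hX'bound : ∀ t ∈ Set.Ici t₀, ‖X' t‖ ≤
      K * (Real.sqrt (2 * En t₀) + (r - 1) * ‖Bc‖ * ‖X t - Xstar‖) / t := by
    intro t ht
    have htpos : 0 < t := lt_of_lt_of_le ht₀ ht
    have h1 : t • X' t = W t - (r - 1) • (X t - Xstar) := by
      simp only [hWdef]; abel
    have h2 : ‖B (t • X' t)‖ ≤ Real.sqrt (2 * En t₀) + (r - 1) * ‖Bc‖ * ‖X t - Xstar‖ := by
      rw [h1, map_sub]
      refine le_trans (norm_sub_le _ _) (add_le_add (hWB t ht) ?_)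
      rw [B.map_smul, norm_smul]
      have h6 : ‖B (X t - Xstar)‖ ≤ ‖Bc‖ * ‖X t - Xstar‖ := by
        rw [← hBcB]; exact Bc.le_opNorm _
      have hr1 : (0:ℝ) ≤ r - 1 := by linarith
      calc ‖(r-1:ℝ)‖ * ‖B (X t - Xstar)‖ = (r-1) * ‖B (X t - Xstar)‖ := by
            rw [Real.norm_of_nonneg hr1]
        _ ≤ (r-1) * (‖Bc‖ * ‖X t - Xstar‖) := mul_le_mul_of_nonneg_left h6 hr1
        _ = (r-1) * ‖Bc‖ * ‖X t - Xstar‖ := by ring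
    have h3 : t * ‖X' t‖ ≤ K * (Real.sqrt (2 * En t₀) + (r - 1) * ‖Bc‖ * ‖X t - Xstar‖) := by
      have h4 : t * ‖X' t‖ = ‖t • X' t‖ := by
        rw [norm_smul, Real.norm_of_nonneg htpos.le]
      rw [h4]
      calc ‖t • X' t‖ ≤ K * ‖B (t • X' t)‖ := hKbound _
        _ ≤ K * (Real.sqrt (2 * En t₀) + (r - 1) * ‖Bc‖ * ‖X t - Xstar‖) :=
            mul_le_mul_of_nonneg_left h2 (le_of_lt (by exact_mod_cast hK0))
    rw [le_div_iff₀ htpos]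
    linarith
  have hX'norm : Tendsto (fun t => ‖X' t‖) atTop (nhds 0) := by
    apply squeeze_zero' (Eventually.of_forall fun t => norm_nonneg _)
    · filter_upwards [eventually_ge_atTop t₀] with t ht
      exact hX'bound t ht
    · have hnum : Tendsto
          (fun t => (K:ℝ) * (Real.sqrt (2 * En t₀) + (r - 1) * ‖Bc‖ * ‖X t - Xstar‖))
          atTop (nhds ((K:ℝ) * (Real.sqrt (2 * En t₀) + (r - 1) * ‖Bc‖ * 0))) :=
        tendsto_const_nhds.mul (tendsto_const_nhds.add (tendsto_const_nhds.mul hXnorm))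
      have h7 := Tendsto.div_atTop hnum tendsto_id
      simpa using h7
  exact ⟨hXlim, tendsto_zero_iff_norm_tendsto_zero.mpr hX'norm⟩
end
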